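/- arXiv:2008.00344 — 3 statements merged into one kernel-verified Lean document; each statement's English description precedes it below -/
import Mathlib

section
/- Let s_n be a sequence of positive reals with s_n = o(n^{-1/2}). Let B_n denote the closed unit ball in n-dimensional Euclidean space and λ^n the Lebesgue measure. Then λ^n((B_n + s_n·e_1) \ B_n) / λ^n(B_n) → 0 as n → ∞, where e_1 is the first standard basis vector. -/
open MeasureTheory Filter

/-- The first standard basis vector of `ℝⁿ` (zero if `n = 0`). -/
noncomputable def firstBasisVector (n : ℕ) : EuclideanSpace ℝ (Fin n) :=
  WithLp.toLp 2 (fun i => if (i : ℕ) = 0 then 1 else 0)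

open Metric Real Set

private lemma gautschi_aux {x : ℝ} (hx : 0 < x) :
    Real.Gamma (x + 1) ≤ Real.sqrt (x + 1/2) * Real.Gamma (x + 1/2) := by
  have h1 : (0:ℝ) < x + 1/2 := by linarith
  have h3 : (0:ℝ) < x + 3/2 := by linarith
  have hA := Real.Gamma_pos_of_pos h1
  have hB := Real.Gamma_pos_of_pos h3
  have hC := Real.Gamma_pos_of_pos (show (0:ℝ) < x + 1 by linarith)
  have hconv := Real.convexOn_log_Gamma.2 (Set.mem_Ioi.mpr h1) (Set.mem_Ioi.mpr h3)
      (by norm_num : (0:ℝ) ≤ 1/2) (by norm_num : (0:ℝ) ≤ 1/2) (by norm_num)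
  have hcomb : (1/2 : ℝ) • (x + 1/2) + (1/2 : ℝ) • (x + 3/2) = x + 1 := by
    simp only [smul_eq_mul]; ring
  rw [hcomb] at hconv
  simp only [Function.comp_apply, smul_eq_mul] at hconv
  have hsq : Real.Gamma (x+1) ^ 2 ≤ Real.Gamma (x + 1/2) * Real.Gamma (x + 3/2) := by
    have h2 : Real.log (Real.Gamma (x+1) ^ 2) ≤
        Real.log (Real.Gamma (x+1/2) * Real.Gamma (x+3/2)) := by
      rw [Real.log_pow, Real.log_mul hA.ne' hB.ne']
      push_cast
      linarith
    exact (Real.log_le_log_iff (by positivity) (by positivity)).mp h2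
  have hrec : Real.Gamma (x + 3/2) = (x + 1/2) * Real.Gamma (x + 1/2) := by
    have := Real.Gamma_add_one h1.ne'
    rw [show x + 1/2 + 1 = x + 3/2 by ring] at this
    exact this
  have hkey : Real.Gamma (x+1) ^ 2 ≤ (Real.sqrt (x + 1/2) * Real.Gamma (x + 1/2)) ^ 2 := by
    have hs : Real.sqrt (x + 1/2) ^ 2 = x + 1/2 := Real.sq_sqrt h1.le
    rw [mul_pow, hs]
    nlinarith [hsq, hrec]
  have h0 : (0:ℝ) ≤ Real.sqrt (x + 1/2) * Real.Gamma (x + 1/2) := by positivity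
  nlinarith [hC]

private lemma sqrt_le_one_iff' (u : ℝ) : Real.sqrt u ≤ 1 ↔ u ≤ 1 := by
  simpa using Real.sqrt_le_left (x := u) zero_le_one

private lemma image_add_closedBall' {E : Type*} [SeminormedAddCommGroup E] (v : E) (r : ℝ) :
    (fun x : E => x + v) '' closedBall 0 r = closedBall v r := by
  ext x
  constructor
  · rintro ⟨y, hy, rfl⟩
    have : ‖y‖ ≤ r := by simpa using mem_closedBall.mp hy
    simp only [mem_closedBall, dist_eq_norm]
    simpa using this
  · intro hx
    refine ⟨x - v, ?_, by simp⟩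
    have : ‖x - v‖ ≤ r := by simpa [dist_eq_norm] using mem_closedBall.mp hx
    simpa [dist_eq_norm] using this

private lemma ball_set_eq (m : ℕ) :
    (MeasurableEquiv.toLp 2 (Fin m → ℝ)) ⁻¹' (closedBall 0 1) =
      {y : Fin m → ℝ | ∑ j, y j ^ 2 ≤ 1} := by
  ext y
  have hd : dist ((MeasurableEquiv.toLp 2 (Fin m → ℝ)) y) 0 =
      Real.sqrt (∑ j, y j ^ 2) := by
    rw [EuclideanSpace.dist_eq]
    congr 1
    exact Finset.sum_congr rfl fun j _ => by
      simp [MeasurableEquiv.coe_toLp, Real.dist_eq, sq_abs]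
  simp only [Set.mem_preimage, mem_closedBall, hd, sqrt_le_one_iff', Set.mem_setOf_eq]

private lemma key_measure_bound (m : ℕ) (a : ℝ) (ha : 0 < a) :
    volume (closedBall (a • firstBasisVector (m+1)) 1 \
        closedBall (0 : EuclideanSpace ℝ (Fin (m+1))) 1) ≤
      ENNReal.ofReal a * volume (closedBall (0 : EuclideanSpace ℝ (Fin m)) 1) := by
  set c : EuclideanSpace ℝ (Fin (m+1)) := a • firstBasisVector (m+1) with hc
  set S : Set (EuclideanSpace ℝ (Fin (m+1))) := closedBall c 1 \ closedBall 0 1 with hS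
  have hSm : MeasurableSet S := measurableSet_closedBall.diff measurableSet_closedBall
  set e : ℝ × (Fin m → ℝ) ≃ᵐ EuclideanSpace ℝ (Fin (m+1)) :=
    (MeasurableEquiv.piFinSuccAbove (fun _ : Fin (m+1) => ℝ) 0).symm.trans
      (MeasurableEquiv.toLp 2 (Fin (m+1) → ℝ)) with he_def
  have he : MeasurePreserving e (volume : Measure (ℝ × (Fin m → ℝ))) volume :=
    ((EuclideanSpace.volume_preserving_symm_measurableEquiv_toLp (Fin (m+1))).symm).comp
      ((volume_preserving_piFinSuccAbove (fun _ : Fin (m+1) => ℝ) 0).symm)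
  have hvol : volume S = volume (e ⁻¹' S) := (he.measure_preimage hSm.nullMeasurableSet).symm
  -- coordinates of e (t, y)
  have hcoord : ∀ (t : ℝ) (y : Fin m → ℝ),
      (e (t, y)) 0 = t ∧ ∀ j : Fin m, (e (t, y)) j.succ = y j := by
    intro t y
    constructor
    · simp [he_def, MeasurableEquiv.coe_toLp,
        MeasurableEquiv.piFinSuccAbove_symm_apply, Fin.insertNthEquiv,
        Fin.insertNth_apply_same]
    · intro j
      simp [he_def, MeasurableEquiv.coe_toLp,
        MeasurableEquiv.piFinSuccAbove_symm_apply, Fin.insertNthEquiv,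
        Fin.insertNth_zero, Fin.cons_succ]
  rw [hvol, Measure.volume_eq_prod, Measure.prod_apply_symm (hSm.preimage he.measurable)]
  have hBs : {y : Fin m → ℝ | ∑ j, y j ^ 2 ≤ 1} =
      (MeasurableEquiv.toLp 2 (Fin m → ℝ)) ⁻¹' (closedBall 0 1) := (ball_set_eq m).symm
  have hBm : MeasurableSet {y : Fin m → ℝ | ∑ j, y j ^ 2 ≤ 1} := by
    rw [hBs]
    exact measurableSet_closedBall.preimage (MeasurableEquiv.measurable _)
  have key : ∀ y : Fin m → ℝ,
      volume ((fun t => (t, y)) ⁻¹' (e ⁻¹' S)) ≤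
        Set.indicator {y : Fin m → ℝ | ∑ j, y j ^ 2 ≤ 1} (fun _ => ENNReal.ofReal a) y := by
    intro y
    set Q := ∑ j, y j ^ 2 with hQdef
    have hQ0 : 0 ≤ Q := Finset.sum_nonneg fun j _ => sq_nonneg _
    have hmem : ∀ t : ℝ, e (t, y) ∈ S ↔ ((t - a)^2 + Q ≤ 1 ∧ ¬ (t^2 + Q ≤ 1)) := by
      intro t
      obtain ⟨h0, hsucc⟩ := hcoord t y
      have hc0 : c 0 = a := by
        simp [hc, firstBasisVector]
      have hcsucc : ∀ j : Fin m, c j.succ = 0 := by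
        intro j; simp [hc, firstBasisVector, Fin.val_succ]
      have hd1 : dist (e (t, y)) c = Real.sqrt ((t - a)^2 + Q) := by
        rw [EuclideanSpace.dist_eq, Fin.sum_univ_succ, h0, hc0]
        congr 2
        · rw [Real.dist_eq, sq_abs]
        · exact Finset.sum_congr rfl fun j _ => by
            rw [hsucc j, hcsucc j, Real.dist_eq, sub_zero, sq_abs]
      have hd2 : dist (e (t, y)) (0 : EuclideanSpace ℝ (Fin (m+1))) = Real.sqrt (t^2 + Q) := by
        rw [EuclideanSpace.dist_eq, Fin.sum_univ_succ, h0]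
        congr 2
        · simp [Real.dist_eq, sq_abs]
        · exact Finset.sum_congr rfl fun j _ => by
            simp [hsucc j, Real.dist_eq, sq_abs]
      rw [hS]
      simp only [Set.mem_diff, mem_closedBall, hd1, hd2, sqrt_le_one_iff']
    by_cases hQ1 : Q ≤ 1
    · have hyin : y ∈ {y : Fin m → ℝ | ∑ j, y j ^ 2 ≤ 1} := hQ1
      rw [Set.indicator_of_mem hyin]
      set r := Real.sqrt (1 - Q) with hrdef
      have hr0 : 0 ≤ r := Real.sqrt_nonneg _
      have hr2 : r ^ 2 = 1 - Q := Real.sq_sqrt (by linarith)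
      have hsub : (fun t => (t, y)) ⁻¹' (e ⁻¹' S) ⊆ Set.Ioc r (r + a) := by
        intro t ht
        simp only [Set.mem_preimage] at ht
        rw [hmem t] at ht
        obtain ⟨h1, h2⟩ := ht
        push_neg at h2
        constructor
        · by_contra hcon
          push_neg at hcon
          have htneg : t ≤ -r := by
            by_contra hcon2
            push_neg at hcon2
            nlinarith [mul_nonneg (sub_nonneg.2 hcon) (by linarith : (0:ℝ) ≤ r + t)]
          nlinarith [mul_nonneg (by linarith : (0:ℝ) ≤ -(t + r))
            (by linarith : (0:ℝ) ≤ -(t - 2*a - r))]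
        · nlinarith [sq_nonneg (t - a - r), sq_nonneg (t - a + r)]
      calc volume ((fun t => (t, y)) ⁻¹' (e ⁻¹' S)) ≤ volume (Set.Ioc r (r + a)) :=
            measure_mono hsub
        _ = ENNReal.ofReal a := by rw [Real.volume_Ioc, add_sub_cancel_left]
    · have hemp : (fun t => (t, y)) ⁻¹' (e ⁻¹' S) = ∅ := by
        ext t
        simp only [Set.mem_preimage, Set.mem_empty_iff_false, iff_false]
        rw [hmem t]
        rintro ⟨h1, -⟩
        exact hQ1 (by nlinarith [sq_nonneg (t - a)])
      simp [hemp]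
  calc (∫⁻ y, volume ((fun t => (t, y)) ⁻¹' (e ⁻¹' S)) ∂volume)
      ≤ ∫⁻ y, Set.indicator {y : Fin m → ℝ | ∑ j, y j ^ 2 ≤ 1}
          (fun _ => ENNReal.ofReal a) y ∂volume := lintegral_mono key
    _ = ENNReal.ofReal a * volume {y : Fin m → ℝ | ∑ j, y j ^ 2 ≤ 1} := by
        rw [lintegral_indicator hBm, setLIntegral_const]
    _ = ENNReal.ofReal a * volume (closedBall (0 : EuclideanSpace ℝ (Fin m)) 1) := by
        rw [hBs, MeasurableEquiv.coe_toLp, (PiLp.volume_preserving_toLp (Fin m)).measure_preimage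
          measurableSet_closedBall.nullMeasurableSet]

private lemma volume_unit_ball_toReal (k : ℕ) :
    (volume (closedBall (0 : EuclideanSpace ℝ (Fin k)) 1)).toReal
      = Real.sqrt π ^ k / Real.Gamma (k / 2 + 1) := by
  rcases k with _ | k
  · have huniv : (closedBall (0 : EuclideanSpace ℝ (Fin 0)) 1) = Set.univ := by
      ext x
      simp [Subsingleton.elim x 0]
    have he := (EuclideanSpace.volume_preserving_symm_measurableEquiv_toLp (Fin 0))
    have h1 : volume (Set.univ : Set (EuclideanSpace ℝ (Fin 0))) = 1 := by
      have := he.measure_preimage (MeasurableSet.univ.nullMeasurableSet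
        (μ := (volume : Measure (Fin 0 → ℝ))))
      simp only [Set.preimage_univ] at this
      rw [this, MeasureTheory.volume_pi, Measure.pi_univ]
      simp
    rw [huniv, h1]
    simp [Real.Gamma_one]
  rw [EuclideanSpace.volume_closedBall]
  simp only [Fintype.card_fin, ENNReal.ofReal_one, one_pow, one_mul]
  have hG' : 0 < Real.Gamma ((↑(k+1) : ℝ) / 2 + 1) := Real.Gamma_pos_of_pos (by positivity)
  rw [ENNReal.toReal_ofReal (div_nonneg (by positivity) hG'.le)]

private lemma gamma_ratio (m : ℕ) :
    Real.sqrt π ^ m / Real.Gamma ((m : ℝ) / 2 + 1) ≤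
      Real.sqrt ((m : ℝ) + 1) *
        (Real.sqrt π ^ (m+1) / Real.Gamma (((m : ℝ) + 1) / 2 + 1)) := by
  set x := (m : ℝ) with hx
  have hx0 : 0 ≤ x := Nat.cast_nonneg m
  have hG1 : 0 < Real.Gamma (x / 2 + 1) := Real.Gamma_pos_of_pos (by positivity)
  have hG2 : 0 < Real.Gamma ((x + 1) / 2 + 1) := Real.Gamma_pos_of_pos (by positivity)
  have hp : (0:ℝ) < Real.sqrt π := Real.sqrt_pos.mpr Real.pi_pos
  have hgau := gautschi_aux (show (0:ℝ) < (x+1)/2 by positivity)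
  rw [show (x+1)/2 + 1/2 = x/2 + 1 by ring] at hgau
  have hs : Real.sqrt (x/2 + 1) ≤ Real.sqrt (x + 1) * Real.sqrt π := by
    rw [← Real.sqrt_mul (by positivity) π]
    apply Real.sqrt_le_sqrt
    nlinarith [Real.pi_gt_three]
  rw [mul_div_assoc']
  rw [div_le_div_iff₀ hG1 hG2]
  calc Real.sqrt π ^ m * Real.Gamma ((x + 1) / 2 + 1)
      ≤ Real.sqrt π ^ m * (Real.sqrt (x/2 + 1) * Real.Gamma (x/2 + 1)) := by
        apply mul_le_mul_of_nonneg_left hgau (by positivity)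
    _ ≤ Real.sqrt π ^ m * ((Real.sqrt (x + 1) * Real.sqrt π) * Real.Gamma (x/2 + 1)) := by
        apply mul_le_mul_of_nonneg_left
          (mul_le_mul_of_nonneg_right hs hG1.le) (by positivity)
    _ = Real.sqrt (x + 1) * Real.sqrt π ^ (m+1) * Real.Gamma (x/2 + 1) := by
        rw [pow_succ]; ring

/-- If `s n > 0` and `s n = o(n^{-1/2})`, i.e. `s n · √n → 0`, then the volume of
`(B_n + s_n e_1) \ B_n` divided by the volume of the unit ball `B_n` tends to `0`. -/
theorem ball_translate_difference_volume_ratio_tendsto_zero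
    (s : ℕ → ℝ) (hs : ∀ n, 0 < s n)
    (hso : Tendsto (fun n : ℕ => s n * Real.sqrt n) atTop (nhds 0)) :
    Tendsto
      (fun n : ℕ =>
        (volume
            (((fun x : EuclideanSpace ℝ (Fin n) => x + s n • firstBasisVector n) ''
                Metric.closedBall 0 1) \ Metric.closedBall 0 1)).toReal /
          (volume (Metric.closedBall (0 : EuclideanSpace ℝ (Fin n)) 1)).toReal)
      atTop (nhds 0) := by
  set f : ℕ → ℝ := fun n =>
    (volume
        (((fun x : EuclideanSpace ℝ (Fin n) => x + s n • firstBasisVector n) ''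
            Metric.closedBall 0 1) \ Metric.closedBall 0 1)).toReal /
      (volume (Metric.closedBall (0 : EuclideanSpace ℝ (Fin n)) 1)).toReal with hf
  apply tendsto_of_tendsto_of_tendsto_of_le_of_le' tendsto_const_nhds hso
  · exact Eventually.of_forall fun n => div_nonneg ENNReal.toReal_nonneg ENNReal.toReal_nonneg
  · filter_upwards [eventually_ge_atTop 1] with n hn
    obtain ⟨m, rfl⟩ : ∃ m, n = m + 1 := ⟨n - 1, by omega⟩
    have himg : ((fun x : EuclideanSpace ℝ (Fin (m+1)) => x + s (m+1) • firstBasisVector (m+1)) ''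
        Metric.closedBall 0 1) = closedBall (s (m+1) • firstBasisVector (m+1)) 1 := by
      rw [image_add_closedBall']
    rw [hf]
    simp only [himg]
    set Vm := volume (closedBall (0 : EuclideanSpace ℝ (Fin m)) 1) with hVm
    set Vn := volume (closedBall (0 : EuclideanSpace ℝ (Fin (m+1))) 1) with hVn
    have hVmtop : Vm ≠ ⊤ := measure_closedBall_lt_top.ne
    have hVnpos : 0 < Vn.toReal :=
      ENNReal.toReal_pos (measure_closedBall_pos _ _ one_pos).ne' measure_closedBall_lt_top.ne
    have hkey := key_measure_bound m (s (m+1)) (hs (m+1))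
    have hA : (volume (closedBall (s (m+1) • firstBasisVector (m+1)) 1 \
        closedBall (0 : EuclideanSpace ℝ (Fin (m+1))) 1)).toReal ≤ s (m+1) * Vm.toReal := by
      have h1 := ENNReal.toReal_mono (ENNReal.mul_ne_top ENNReal.ofReal_ne_top hVmtop) hkey
      rwa [ENNReal.toReal_mul, ENNReal.toReal_ofReal (hs (m+1)).le] at h1
    have hratio : Vm.toReal / Vn.toReal ≤ Real.sqrt ((m : ℝ) + 1) := by
      rw [div_le_iff₀ hVnpos, hVm, hVn, volume_unit_ball_toReal, volume_unit_ball_toReal]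
      have := gamma_ratio m
      push_cast
      convert this using 3 <;> push_cast <;> ring
    have h2 : (volume (closedBall (s (m+1) • firstBasisVector (m+1)) 1 \
        closedBall (0 : EuclideanSpace ℝ (Fin (m+1))) 1)).toReal / Vn.toReal ≤
          s (m+1) * (Vm.toReal / Vn.toReal) := by
      rw [← mul_div_assoc]
      gcongr
    refine h2.trans ?_
    have : s (m+1) * (Vm.toReal / Vn.toReal) ≤ s (m+1) * Real.sqrt ((m:ℝ) + 1) :=
      mul_le_mul_of_nonneg_left hratio (hs (m+1)).le
    refine this.trans_eq ?_
    push_cast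
    ring
end

section
/- A central extension of a skew-amenable topological group is skew-amenable: if Z is a central closed subgroup of a topological group G such that G/Z is skew-amenable and Z (as a discrete group, being abelian) admits an invariant mean, then G is skew-amenable. -/
/-- A real-valued function is bounded. -/
def IsBddFun {X : Type*} (f : X → ℝ) : Prop := ∃ C : ℝ, ∀ x, |f x| ≤ C

/-- `f : G → ℝ` is left uniformly continuous: for every `ε > 0` there is a
neighbourhood `V` of the identity with `|f x − f (x v)| < ε` for all `x ∈ G`, `v ∈ V`. -/
def IsLUC (G : Type*) [Group G] [TopologicalSpace G] (f : G → ℝ) : Prop :=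
  ∀ ε > (0 : ℝ), ∃ V ∈ nhds (1 : G), ∀ x : G, ∀ v ∈ V, |f x - f (x * v)| < ε

/-- `m` is a left-invariant mean on the class `P` of functions `G → ℝ`:
normalized, linear on `P`, positive on `P`, and invariant under left translations. -/
def IsLeftInvariantMeanOn (G : Type*) [Group G] (P : (G → ℝ) → Prop)
    (m : (G → ℝ) → ℝ) : Prop :=
  m (fun _ => 1) = 1 ∧
  (∀ f g : G → ℝ, ∀ a b : ℝ, P f → P g →
      m (fun x => a * f x + b * g x) = a * m f + b * m g) ∧
  (∀ f : G → ℝ, P f → (∀ x, 0 ≤ f x) → 0 ≤ m f) ∧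
  (∀ f : G → ℝ, P f → ∀ g : G, m (fun x => f (g * x)) = m f)

/-- A topological group is skew-amenable if there is a left-invariant mean on the
space of bounded left uniformly continuous real-valued functions. -/
def SkewAmenable (G : Type*) [Group G] [TopologicalSpace G] : Prop :=
  ∃ m : (G → ℝ) → ℝ,
    IsLeftInvariantMeanOn G (fun f => IsBddFun f ∧ IsLUC G f) m

/-- A central extension of a skew-amenable topological group is skew-amenable:
if `Z` is a closed central subgroup of `G`, the quotient `G/Z` is skew-amenable,
and `Z` (as a discrete group) admits an invariant mean on all bounded functions,
then `G` is skew-amenable. -/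
theorem skewAmenable_of_central_extension (G : Type*) [Group G] [TopologicalSpace G]
    [IsTopologicalGroup G] (Z : Subgroup G) [Z.Normal]
    (hcentral : Z ≤ Subgroup.center G) (hclosed : IsClosed (Z : Set G))
    (hZmean : ∃ m : (Z → ℝ) → ℝ,
      IsLeftInvariantMeanOn Z (fun f => IsBddFun f) m)
    (hquot : SkewAmenable (G ⧸ Z)) :
    SkewAmenable G := by
  classical
  obtain ⟨mZ, hZ1, hZlin, hZpos, hZinv⟩ := hZmean
  obtain ⟨mQ, hQ1, hQlin, hQpos, hQinv⟩ := hquot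
  -- subtraction for mZ
  have hZsub : ∀ h₁ h₂ : Z → ℝ, IsBddFun h₁ → IsBddFun h₂ →
      mZ (fun z => h₁ z - h₂ z) = mZ h₁ - mZ h₂ := by
    intro h₁ h₂ hb₁ hb₂
    have e : (fun z : Z => h₁ z - h₂ z) = fun z => 1 * h₁ z + (-1) * h₂ z := by
      funext z; ring
    rw [e, hZlin h₁ h₂ 1 (-1) hb₁ hb₂]; ring
  -- bound for mZ
  have hZone : IsBddFun (fun _ : Z => (1 : ℝ)) := ⟨1, fun _ => by norm_num⟩
  have hZbound : ∀ (h : Z → ℝ) (C : ℝ), (∀ z, |h z| ≤ C) → |mZ h| ≤ C := by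
    intro h C hC
    have hC0 : 0 ≤ C := le_trans (abs_nonneg (h 1)) (hC 1)
    have hb : IsBddFun h := ⟨C, hC⟩
    have hup : mZ h ≤ C := by
      have e : (fun z : Z => C - h z) = fun z => C * 1 + (-1) * h z := by
        funext z; ring
      have hpos := hZpos (fun z => C - h z)
        ⟨C + C, fun z => by
          have h1 := abs_le.1 (hC z)
          dsimp only; rw [abs_le]; constructor <;> linarith⟩
        (fun z => by linarith [(abs_le.1 (hC z)).2])
      rw [e, hZlin _ h C (-1) hZone hb, hZ1] at hpos
      linarith
    have hlow : -C ≤ mZ h := by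
      have e : (fun z : Z => h z + C) = fun z => 1 * h z + C * 1 := by
        funext z; ring
      have hpos := hZpos (fun z => h z + C)
        ⟨C + C, fun z => by
          have h1 := abs_le.1 (hC z)
          dsimp only; rw [abs_le]; constructor <;> linarith⟩
        (fun z => by linarith [(abs_le.1 (hC z)).1])
      rw [e, hZlin h _ 1 C hb hZone, hZ1] at hpos
      linarith
    exact abs_le.2 ⟨hlow, hup⟩
  -- the averaged function
  set F : (G → ℝ) → G → ℝ := fun f x => mZ (fun z : Z => f (x * (z : G))) with hFdef
  have hbdd : ∀ f : G → ℝ, IsBddFun f → ∀ x : G, IsBddFun (fun z : Z => f (x * (z : G))) := by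
    intro f ⟨C, hC⟩ x; exact ⟨C, fun z => hC _⟩
  -- F is constant on cosets
  have hFmul : ∀ f : G → ℝ, IsBddFun f → ∀ (x : G) (z : Z), F f (x * (z : G)) = F f x := by
    intro f hf x z
    have h1 := hZinv (fun w : Z => f (x * (w : G))) (hbdd f hf x) z
    have e : (fun w : Z => f (x * ((z * w : Z) : G))) = fun w : Z => f (x * (z : G) * (w : G)) := by
      funext w; push_cast; rw [mul_assoc]
    rw [hFdef]
    dsimp only
    rw [← h1, ← e]
  set Fb : (G → ℝ) → (G ⧸ Z) → ℝ := fun f q => F f q.out with hFbdef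
  have hFmk : ∀ f : G → ℝ, IsBddFun f → ∀ x : G, Fb f (QuotientGroup.mk x) = F f x := by
    intro f hf x
    obtain ⟨z, hz⟩ := QuotientGroup.mk_out_eq_mul Z x
    rw [hFbdef]; dsimp only; rw [hz, hFmul f hf x z]
  -- Fb f is bounded and LUC when f is
  have hFbP : ∀ f : G → ℝ, IsBddFun f ∧ IsLUC G f →
      IsBddFun (Fb f) ∧ IsLUC (G ⧸ Z) (Fb f) := by
    intro f ⟨hfb, hfl⟩
    constructor
    · obtain ⟨C, hC⟩ := hfb
      exact ⟨C, fun q => hZbound _ C (fun z => hC _)⟩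
    · intro ε hε
      obtain ⟨V, hV, hVf⟩ := hfl (ε / 2) (by linarith)
      refine ⟨QuotientGroup.mk '' V, (QuotientGroup.isOpenMap_coe).image_mem_nhds
        (by simpa using hV), ?_⟩
      intro q v hv
      obtain ⟨v₀, hv₀, rfl⟩ := hv
      obtain ⟨x, rfl⟩ : ∃ x : G, q = QuotientGroup.mk x :=
        ⟨q.out, (QuotientGroup.out_eq' q).symm⟩
      have e1 : Fb f (QuotientGroup.mk x) = F f x := hFmk f hfb x
      have e2 : Fb f (QuotientGroup.mk x * QuotientGroup.mk v₀) = F f (x * v₀) := by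
        rw [show (QuotientGroup.mk x : G ⧸ Z) * QuotientGroup.mk v₀
            = QuotientGroup.mk (x * v₀) from rfl]
        exact hFmk f hfb _
      rw [e1, e2]
      have ecomm : ∀ z : Z, x * v₀ * (z : G) = x * (z : G) * v₀ := by
        intro z
        have hzc := (Subgroup.mem_center_iff.1 (hcentral z.2)) v₀
        rw [mul_assoc, mul_assoc, hzc]
      have ediff : F f x - F f (x * v₀)
          = mZ (fun z : Z => f (x * (z : G)) - f (x * (z : G) * v₀)) := by
        have e : (fun z : Z => f (x * (z : G)) - f (x * (z : G) * v₀))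
            = fun z : Z => f (x * (z : G)) - f (x * v₀ * (z : G)) := by
          funext z; rw [ecomm z]
        rw [e, hZsub (fun z : Z => f (x * (z : G))) (fun z : Z => f (x * v₀ * (z : G)))
          (hbdd f hfb x) (hbdd f hfb (x * v₀))]
      have hle : |F f x - F f (x * v₀)| ≤ ε / 2 := by
        rw [ediff]
        exact hZbound _ (ε / 2) (fun z => le_of_lt (hVf (x * (z : G)) v₀ hv₀))
      calc |F f x - F f (x * v₀)| ≤ ε / 2 := hle
        _ < ε := by linarith
  refine ⟨fun f => mQ (Fb f), ?_, ?_, ?_, ?_⟩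
  · show mQ (Fb (fun _ => 1)) = 1
    have e : Fb (fun _ : G => (1 : ℝ)) = fun _ => (1 : ℝ) := by
      funext q; rw [hFbdef]; dsimp only; rw [hFdef]; exact hZ1
    rw [e]; exact hQ1
  · intro f g a b hf hg
    show mQ (Fb (fun x => a * f x + b * g x)) = a * mQ (Fb f) + b * mQ (Fb g)
    have e : Fb (fun x => a * f x + b * g x) = fun q => a * Fb f q + b * Fb g q := by
      funext q
      rw [hFbdef]; dsimp only; rw [hFdef]; dsimp only
      exact hZlin _ _ a b (hbdd f hf.1 _) (hbdd g hg.1 _)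
    rw [e]
    exact hQlin (Fb f) (Fb g) a b (hFbP f hf) (hFbP g hg)
  · intro f hf hfpos
    exact hQpos (Fb f) (hFbP f hf) (fun q => hZpos _ (hbdd f hf.1 _) (fun z => hfpos _))
  · intro f hf g
    show mQ (Fb (fun x => f (g * x))) = mQ (Fb f)
    have hf' : IsBddFun (fun x => f (g * x)) ∧ IsLUC G (fun x => f (g * x)) := by
      obtain ⟨⟨C, hC⟩, hfl⟩ := hf
      refine ⟨⟨C, fun x => hC _⟩, ?_⟩
      intro ε hε
      obtain ⟨V, hV, hVf⟩ := hfl ε hε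
      exact ⟨V, hV, fun x v hv => by simpa [mul_assoc] using hVf (g * x) v hv⟩
    have e : Fb (fun x => f (g * x)) = fun q => Fb f (QuotientGroup.mk g * q) := by
      funext q
      obtain ⟨x, rfl⟩ : ∃ x : G, q = QuotientGroup.mk x :=
        ⟨q.out, (QuotientGroup.out_eq' q).symm⟩
      rw [hFmk _ hf'.1 x]
      rw [show (QuotientGroup.mk g : G ⧸ Z) * QuotientGroup.mk x
          = QuotientGroup.mk (g * x) from rfl, hFmk f hf.1]
      rw [hFdef]; dsimp only
      congr 1; funext z; rw [mul_assoc]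
    rw [e]
    exact hQinv (Fb f) (hFbP f hf) (QuotientGroup.mk g)
end

section
/- Let f be a 1-Lipschitz real-valued function on the closed unit ball B_m of ℝ^m (with normalized Lebesgue measure ν) with median 0. Then for every ε > 0, ν{x ∈ B_m : |f(x)| > ε} ≤ 2·exp(−c·ε²·m) for some universal constant c > 0. -/
open MeasureTheory

/-- The Lebesgue measure on the closed Euclidean unit ball of `ℝ^m`, normalized to a
probability measure. -/
noncomputable def unitBallUniform (m : ℕ) : Measure (EuclideanSpace ℝ (Fin m)) :=
  (volume (Metric.closedBall (0 : EuclideanSpace ℝ (Fin m)) 1))⁻¹ •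
    volume.restrict (Metric.closedBall (0 : EuclideanSpace ℝ (Fin m)) 1)

section LevyAux

open Set Metric
open scoped ENNReal NNReal Pointwise

lemma vol_half_smul (K : Set ℝ) : volume ((2:ℝ)⁻¹ • K) = 2⁻¹ * volume K := by
  rw [Measure.addHaar_smul_of_nonneg volume (by norm_num : (0:ℝ) ≤ 2⁻¹)]
  rw [Module.finrank_self]
  rw [pow_one, ENNReal.ofReal_inv_of_pos (by norm_num : (0:ℝ) < 2)]
  norm_num

lemma compact_mid (K L : Set ℝ) (hK : IsCompact K) (hL : IsCompact L)
    (hKne : K.Nonempty) (hLne : L.Nonempty) (U : Set ℝ)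
    (hsub : ∀ s ∈ K, ∀ t ∈ L, (2:ℝ)⁻¹ * (s + t) ∈ U) :
    volume K + volume L ≤ 2 * volume U := by
  obtain ⟨a, haK, ha⟩ := hK.exists_isMaxOn hKne continuousOn_id
  obtain ⟨b, hbL, hb⟩ := hL.exists_isMinOn hLne continuousOn_id
  set X : Set ℝ := (fun x => (2:ℝ)⁻¹ * (x + b)) '' K with hX
  set Y : Set ℝ := (fun y => (2:ℝ)⁻¹ * (a + y)) '' L with hY
  have hXU : X ⊆ U := by rintro _ ⟨x, hx, rfl⟩; exact hsub x hx b hbL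
  have hYU : Y ⊆ U := by rintro _ ⟨y, hy, rfl⟩; exact hsub a haK y hy
  have hXc : IsCompact X := hK.image (by continuity)
  have hYc : IsCompact Y := hL.image (by continuity)
  have hXY : X ∩ Y ⊆ {(2:ℝ)⁻¹ * (a + b)} := by
    rintro z ⟨⟨x, hx, rfl⟩, ⟨y, hy, hyz⟩⟩
    simp only at hyz
    have h1 : x ≤ a := ha hx
    have h2 : b ≤ y := hb hy
    have hxa : x = a := by
      have : a + y = x + b := by linarith
      linarith
    simp only [mem_singleton_iff]
    rw [hxa]
  have hvolX : volume X = 2⁻¹ * volume K := by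
    have hXeq : X = (fun z => z + (2:ℝ)⁻¹*b) '' ((2:ℝ)⁻¹ • K) := by
      ext z
      simp only [hX, mem_image, Set.mem_smul_set, smul_eq_mul]
      constructor
      · rintro ⟨x, hx, rfl⟩; exact ⟨2⁻¹*x, ⟨x, hx, rfl⟩, by ring⟩
      · rintro ⟨w, ⟨x, hx, rfl⟩, rfl⟩; exact ⟨x, hx, by ring⟩
    rw [hXeq, Set.image_add_right, measure_preimage_add_right, vol_half_smul]
  have hvolY : volume Y = 2⁻¹ * volume L := by
    have hYeq : Y = (fun z => z + (2:ℝ)⁻¹*a) '' ((2:ℝ)⁻¹ • L) := by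
      ext z
      simp only [hY, mem_image, Set.mem_smul_set, smul_eq_mul]
      constructor
      · rintro ⟨y, hy, rfl⟩; exact ⟨2⁻¹*y, ⟨y, hy, rfl⟩, by ring⟩
      · rintro ⟨w, ⟨y, hy, rfl⟩, rfl⟩; exact ⟨y, hy, by ring⟩
    rw [hYeq, Set.image_add_right, measure_preimage_add_right, vol_half_smul]
  have key : volume X + volume Y ≤ volume U := by
    have hinter : volume (X ∩ Y) = 0 :=
      le_antisymm (le_trans (measure_mono hXY) (by simp)) zero_le
    have h2 := measure_union_add_inter (μ := volume) X hYc.measurableSet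
    calc volume X + volume Y = volume (X ∪ Y) + volume (X ∩ Y) := h2.symm
      _ = volume (X ∪ Y) := by rw [hinter, add_zero]
      _ ≤ volume U := measure_mono (union_subset hXU hYU)
  calc volume K + volume L = 2 * (volume X + volume Y) := by
        rw [hvolX, hvolY, mul_add, ← mul_assoc, ← mul_assoc,
          ENNReal.mul_inv_cancel (by norm_num) (by norm_num), one_mul, one_mul]
    _ ≤ 2 * volume U := by gcongr

lemma midpoint_volume (S T U : Set ℝ) (hSne : S.Nonempty) (hTne : T.Nonempty)
    (hS : MeasurableSet S) (hT : MeasurableSet T)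
    (hsub : ∀ s ∈ S, ∀ t ∈ T, (2:ℝ)⁻¹ * (s + t) ∈ U) :
    volume S + volume T ≤ 2 * volume U := by
  obtain ⟨p, hp⟩ := hSne
  obtain ⟨q, hq⟩ := hTne
  have main : ∀ K L : Set ℝ, K ⊆ S → IsCompact K → L ⊆ T → IsCompact L →
      volume K + volume L ≤ 2 * volume U := by
    intro K L hKS hKc hLT hLc
    have h1 : volume K ≤ volume (insert p K) := measure_mono (subset_insert _ _)
    have h2 : volume L ≤ volume (insert q L) := measure_mono (subset_insert _ _)
    refine le_trans (add_le_add h1 h2) ?_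
    exact compact_mid _ _ (hKc.insert p) (hLc.insert q) ⟨p, mem_insert _ _⟩
      ⟨q, mem_insert _ _⟩ U (fun s hs t ht => hsub s
        (by rcases mem_insert_iff.mp hs with rfl | hs'; exacts [hp, hKS hs']) t
        (by rcases mem_insert_iff.mp ht with rfl | ht'; exacts [hq, hLT ht']))
  have sup0 : ∀ (P Q : Prop) (x : ℝ≥0∞), ¬(P ∧ Q) → (⨆ (_:P) (_:Q), x) = 0 := by
    intro P Q x h
    rcases not_and_or.mp h with h | h <;> simp [h]
  rw [hS.measure_eq_iSup_isCompact, hT.measure_eq_iSup_isCompact]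
  refine ENNReal.iSup_add_iSup_le fun K L => ?_
  rcases em (K ⊆ S ∧ IsCompact K) with ⟨h1, h2⟩ | hKbad
  · rcases em (L ⊆ T ∧ IsCompact L) with ⟨h3, h4⟩ | hLbad
    · simpa [h1, h2, h3, h4] using main K L h1 h2 h3 h4
    · rw [sup0 _ _ _ hLbad, add_zero]
      refine le_trans ?_ (main K {q} h1 h2 (by simpa using hq) isCompact_singleton)
      simp [h1, h2, le_add_right]
  · rw [sup0 _ _ _ hKbad, zero_add]
    rcases em (L ⊆ T ∧ IsCompact L) with ⟨h3, h4⟩ | hLbad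
    · refine le_trans ?_ (main {p} L (by simpa using hp) isCompact_singleton h3 h4)
      simp [h3, h4, le_add_left]
    · rw [sup0 _ _ _ hLbad]
      exact zero_le

lemma amgm_ennreal (a b : ℝ≥0∞) : 4 * (a * b) ≤ (a + b)^2 := by
  rcases eq_or_ne a ∞ with rfl | ha
  · rcases eq_or_ne b 0 with rfl | hb
    · simp
    · rw [ENNReal.top_mul hb]; simp [ENNReal.add_eq_top]
  rcases eq_or_ne b ∞ with rfl | hb
  · rcases eq_or_ne a 0 with rfl | ha0
    · simp
    · rw [ENNReal.mul_top ha0]; simp [ENNReal.add_eq_top]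
  lift a to ℝ≥0 using ha
  lift b to ℝ≥0 using hb
  have hnn : (4 * (a * b) : ℝ≥0) ≤ ((a + b)^2 : ℝ≥0) := by
    rw [← NNReal.coe_le_coe]
    push_cast
    nlinarith [sq_nonneg ((a:ℝ) - b)]
  exact_mod_cast hnn

/-- Core normalized 1-D Prékopa–Leindler-type inequality. -/
lemma pl1_core (f g h : ℝ → ℝ≥0∞) (hf : Measurable f) (hg : Measurable g)
    (hh : Measurable h) (hf1 : ∀ x, f x ≤ 1) (hg1 : ∀ x, g x ≤ 1) (hh1 : ∀ x, h x ≤ 1)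
    (hfs : (⨆ x, f x) = 1) (hgs : (⨆ x, g x) = 1)
    (hyp : ∀ x y, f x * g y ≤ (h ((2:ℝ)⁻¹ * (x + y)))^2) :
    (∫⁻ x, f x) + (∫⁻ x, g x) ≤ 2 * ∫⁻ x, h x := by
  set F : ℝ → ℝ := fun x => (f x).toReal with hF
  set G : ℝ → ℝ := fun x => (g x).toReal with hG
  set H : ℝ → ℝ := fun x => (h x).toReal with hH
  have hfne : ∀ x, f x ≠ ∞ := fun x => (lt_of_le_of_lt (hf1 x) (by norm_num)).ne
  have hgne : ∀ x, g x ≠ ∞ := fun x => (lt_of_le_of_lt (hg1 x) (by norm_num)).ne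
  have hhne : ∀ x, h x ≠ ∞ := fun x => (lt_of_le_of_lt (hh1 x) (by norm_num)).ne
  have hFof : ∀ x, ENNReal.ofReal (F x) = f x := fun x => ENNReal.ofReal_toReal (hfne x)
  have hGof : ∀ x, ENNReal.ofReal (G x) = g x := fun x => ENNReal.ofReal_toReal (hgne x)
  have hHof : ∀ x, ENNReal.ofReal (H x) = h x := fun x => ENNReal.ofReal_toReal (hhne x)
  have hFm : Measurable F := hf.ennreal_toReal
  have hGm : Measurable G := hg.ennreal_toReal
  have hHm : Measurable H := hh.ennreal_toReal
  have hF1 : ∀ x, F x ≤ 1 := fun x => by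
    simpa using ENNReal.toReal_mono (by norm_num) (hf1 x)
  have hG1 : ∀ x, G x ≤ 1 := fun x => by
    simpa using ENNReal.toReal_mono (by norm_num) (hg1 x)
  -- layer cake
  have layF : ∫⁻ x, f x = ∫⁻ t in Ioi (0:ℝ), volume {a | t < F a} := by
    rw [← lintegral_eq_lintegral_meas_lt volume (Filter.Eventually.of_forall fun x =>
      ENNReal.toReal_nonneg) hFm.aemeasurable]
    exact lintegral_congr fun x => (hFof x).symm
  have layG : ∫⁻ x, g x = ∫⁻ t in Ioi (0:ℝ), volume {a | t < G a} := by
    rw [← lintegral_eq_lintegral_meas_lt volume (Filter.Eventually.of_forall fun x =>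
      ENNReal.toReal_nonneg) hGm.aemeasurable]
    exact lintegral_congr fun x => (hGof x).symm
  have layH : ∫⁻ x, h x = ∫⁻ t in Ioi (0:ℝ), volume {a | t < H a} := by
    rw [← lintegral_eq_lintegral_meas_lt volume (Filter.Eventually.of_forall fun x =>
      ENNReal.toReal_nonneg) hHm.aemeasurable]
    exact lintegral_congr fun x => (hHof x).symm
  -- the key pointwise (in t) inequality on (0,1)
  have key : ∀ t ∈ Ioo (0:ℝ) 1,
      volume {a | t < F a} + volume {a | t < G a} ≤ 2 * volume {a | t < H a} := by
    intro t ht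
    have htlt : ENNReal.ofReal t < 1 := by
      rw [show (1:ℝ≥0∞) = ENNReal.ofReal 1 by simp]
      exact (ENNReal.ofReal_lt_ofReal_iff (by norm_num)).mpr ht.2
    have hSne : {a | t < F a}.Nonempty := by
      obtain ⟨x, hx⟩ := lt_iSup_iff.mp (hfs ▸ htlt)
      exact ⟨x, by
        have := ENNReal.toReal_strict_mono (hfne x) hx
        simpa [ENNReal.toReal_ofReal ht.1.le] using this⟩
    have hTne : {a | t < G a}.Nonempty := by
      obtain ⟨x, hx⟩ := lt_iSup_iff.mp (hgs ▸ htlt)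
      exact ⟨x, by
        have := ENNReal.toReal_strict_mono (hgne x) hx
        simpa [ENNReal.toReal_ofReal ht.1.le] using this⟩
    refine midpoint_volume _ _ _ hSne hTne (measurableSet_lt measurable_const hFm)
      (measurableSet_lt measurable_const hGm) ?_
    intro s hs u hu
    have hfs' : ENNReal.ofReal t < f s := by
      rw [← hFof s]; exact (ENNReal.ofReal_lt_ofReal_iff (ht.1.trans hs)).mpr hs
    have hgu' : ENNReal.ofReal t < g u := by
      rw [← hGof u]; exact (ENNReal.ofReal_lt_ofReal_iff (ht.1.trans hu)).mpr hu
    have hmul : (ENNReal.ofReal t)^2 < f s * g u := by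
      rw [sq]; exact ENNReal.mul_lt_mul hfs' hgu'
    have hsq : (ENNReal.ofReal t)^2 < (h ((2:ℝ)⁻¹ * (s + u)))^2 :=
      lt_of_lt_of_le hmul (hyp s u)
    have : ENNReal.ofReal t < h ((2:ℝ)⁻¹ * (s + u)) := by
      by_contra hcon
      push_neg at hcon
      exact absurd (pow_le_pow_left' hcon 2) (not_le.mpr hsq)
    show t < H ((2:ℝ)⁻¹ * (s + u))
    have := ENNReal.toReal_strict_mono (hhne _) this
    simpa [ENNReal.toReal_ofReal ht.1.le] using this
  -- restrict integrals to (0,1)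
  have hSmeas : Measurable (fun t : ℝ => volume {a | t < F a}) := by
    apply Antitone.measurable
    intro t t' htt'
    exact measure_mono (fun a ha => lt_of_le_of_lt htt' ha)
  have hGmeas : Measurable (fun t : ℝ => volume {a | t < G a}) := by
    apply Antitone.measurable
    intro t t' htt'
    exact measure_mono (fun a ha => lt_of_le_of_lt htt' ha)
  have hHmeas : Measurable (fun t : ℝ => volume {a | t < H a}) := by
    apply Antitone.measurable
    intro t t' htt'
    exact measure_mono (fun a ha => lt_of_le_of_lt htt' ha)
  have vanish : ∀ (F' : ℝ → ℝ), (∀ x, F' x ≤ 1) →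
      ∫⁻ t in Ioi (0:ℝ), volume {a | t < F' a} = ∫⁻ t in Ioo (0:ℝ) 1, volume {a | t < F' a} := by
    intro F' hF'
    rw [← Ioo_union_Ici_eq_Ioi (by norm_num : (0:ℝ) < 1),
      lintegral_union measurableSet_Ici (by
        rw [Set.disjoint_left]
        rintro t ⟨_, ht1⟩ (ht2 : (1:ℝ) ≤ t)
        linarith)]
    have : ∫⁻ t in Ici (1:ℝ), volume {a | t < F' a} = 0 := by
      rw [setLIntegral_congr_fun measurableSet_Ici
        (fun t (ht : 1 ≤ t) => ?_), lintegral_zero]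
      have : {a | t < F' a} = ∅ := eq_empty_of_forall_notMem fun a ha =>
        absurd (lt_of_le_of_lt ht ha) (not_lt.mpr (hF' a))
      rw [this]; exact measure_empty
    rw [this, add_zero]
  calc (∫⁻ x, f x) + (∫⁻ x, g x)
      = ∫⁻ t in Ioo (0:ℝ) 1, (volume {a | t < F a} + volume {a | t < G a}) := by
        rw [layF, layG, vanish F hF1, vanish G hG1, lintegral_add_left hSmeas]
    _ ≤ ∫⁻ t in Ioo (0:ℝ) 1, 2 * volume {a | t < H a} := by
        refine setLIntegral_mono_ae ((hHmeas.const_mul 2).aemeasurable) ?_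
        · exact Filter.Eventually.of_forall (fun t ht => key t ht)
    _ = 2 * ∫⁻ t in Ioo (0:ℝ) 1, volume {a | t < H a} := lintegral_const_mul' _ _ (by norm_num)
    _ ≤ 2 * ∫⁻ t in Ioi (0:ℝ), volume {a | t < H a} := by
        gcongr
        exact Ioo_subset_Ioi_self
    _ = 2 * ∫⁻ x, h x := by rw [layH]

/-- A (volume) measure space with real scalar action satisfies the multiplicative
midpoint Brunn-Minkowski / Prékopa-Leindler inequality. -/
def IsPLSpace (α : Type*) [MeasureSpace α] [AddCommMonoid α] [SMul ℝ α] : Prop :=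
  ∀ f g h : α → ℝ≥0∞, Measurable f → Measurable g → Measurable h →
    (∀ x y, f x * g y ≤ (h ((2:ℝ)⁻¹ • (x + y)))^2) →
    (∫⁻ x, f x) * (∫⁻ x, g x) ≤ (∫⁻ x, h x)^2

lemma min_sq (a b : ℝ≥0∞) : (min a b)^2 = min (a^2) (b^2) := by
  rcases le_total a b with hle | hle
  · rw [min_eq_left hle, min_eq_left (pow_le_pow_left' hle 2)]
  · rw [min_eq_right hle, min_eq_right (pow_le_pow_left' hle 2)]

lemma pl1_bounded (f g h : ℝ → ℝ≥0∞) (hf : Measurable f) (hg : Measurable g)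
    (hh : Measurable h)
    (hMf0 : (⨆ x, f x) ≠ 0) (hMft : (⨆ x, f x) ≠ ∞)
    (hMg0 : (⨆ x, g x) ≠ 0) (hMgt : (⨆ x, g x) ≠ ∞)
    (hyp : ∀ x y, f x * g y ≤ (h ((2:ℝ)⁻¹ * (x + y)))^2) :
    (∫⁻ x, f x) * (∫⁻ x, g x) ≤ (∫⁻ x, h x)^2 := by
  set Mf := ⨆ x, f x with hMf
  set Mg := ⨆ x, g x with hMg
  have hMfMg0 : Mf * Mg ≠ 0 := by simp [hMf0, hMg0]
  have hMfMgt : Mf * Mg ≠ ∞ := ENNReal.mul_ne_top hMft hMgt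
  set s : ℝ≥0∞ := (Mf * Mg) ^ (2⁻¹ : ℝ) with hs
  have hs0 : s ≠ 0 := by
    simp only [hs, ne_eq, ENNReal.rpow_eq_zero_iff, not_or, not_and]
    exact ⟨fun h1 _ => hMfMg0 h1, fun h1 _ => hMfMgt h1⟩
  have hst : s ≠ ∞ := by
    simp only [hs, ne_eq, ENNReal.rpow_eq_top_iff, not_or, not_and]
    exact ⟨fun h1 _ => hMfMg0 h1, fun h1 _ => hMfMgt h1⟩
  have hssq : s^2 = Mf * Mg := by
    rw [hs, ← ENNReal.rpow_natCast _ 2, ← ENNReal.rpow_mul]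
    norm_num
  set F : ℝ → ℝ≥0∞ := fun x => f x * Mf⁻¹ with hF
  set G : ℝ → ℝ≥0∞ := fun x => g x * Mg⁻¹ with hG
  set H : ℝ → ℝ≥0∞ := fun x => min (h x) s * s⁻¹ with hH
  have hFm : Measurable F := hf.mul_const _
  have hGm : Measurable G := hg.mul_const _
  have hHm : Measurable H := (hh.min measurable_const).mul_const _
  have hF1 : ∀ x, F x ≤ 1 := fun x => by
    show f x * Mf⁻¹ ≤ 1
    rw [← div_eq_mul_inv]
    exact ENNReal.div_le_of_le_mul (by rw [one_mul]; exact le_iSup f x)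
  have hG1 : ∀ x, G x ≤ 1 := fun x => by
    show g x * Mg⁻¹ ≤ 1
    rw [← div_eq_mul_inv]
    exact ENNReal.div_le_of_le_mul (by rw [one_mul]; exact le_iSup g x)
  have hH1 : ∀ x, H x ≤ 1 := fun x => by
    show min (h x) s * s⁻¹ ≤ 1
    rw [← div_eq_mul_inv]
    exact ENNReal.div_le_of_le_mul (by rw [one_mul]; exact min_le_right _ _)
  have hFs : (⨆ x, F x) = 1 := by
    simp only [hF, ← div_eq_mul_inv]
    rw [← ENNReal.iSup_div, ← hMf, ENNReal.div_self hMf0 hMft]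
  have hGs : (⨆ x, G x) = 1 := by
    simp only [hG, ← div_eq_mul_inv]
    rw [← ENNReal.iSup_div, ← hMg, ENNReal.div_self hMg0 hMgt]
  have hinvmul : (Mf * Mg)⁻¹ = Mf⁻¹ * Mg⁻¹ := ENNReal.mul_inv (Or.inl hMf0) (Or.inl hMft)
  have hyp' : ∀ x y, F x * G y ≤ (H ((2:ℝ)⁻¹ * (x + y)))^2 := by
    intro x y
    have hdiv : F x * G y = f x * g y * (Mf * Mg)⁻¹ := by
      show f x * Mf⁻¹ * (g y * Mg⁻¹) = _
      rw [hinvmul]; ring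
    have hH2 : (H ((2:ℝ)⁻¹ * (x + y)))^2
        = min ((h ((2:ℝ)⁻¹ * (x + y)))^2) (Mf * Mg) * (Mf * Mg)⁻¹ := by
      show (min (h ((2:ℝ)⁻¹ * (x + y))) s * s⁻¹)^2 = _
      rw [mul_pow, ← ENNReal.inv_pow, min_sq, hssq]
    rw [hdiv, hH2]
    gcongr
    exact le_min (hyp x y) (mul_le_mul' (le_iSup f x) (le_iSup g y))
  have hcore := pl1_core F G H hFm hGm hHm hF1 hG1 hH1 hFs hGs hyp'
  have hamgm : 4 * ((∫⁻ x, F x) * (∫⁻ x, G x)) ≤ 4 * (∫⁻ x, H x)^2 := by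
    calc 4 * ((∫⁻ x, F x) * (∫⁻ x, G x)) ≤ ((∫⁻ x, F x) + (∫⁻ x, G x))^2 :=
          amgm_ennreal _ _
      _ ≤ (2 * ∫⁻ x, H x)^2 := by gcongr
      _ = 4 * (∫⁻ x, H x)^2 := by rw [mul_pow]; norm_num
  have hFG : (∫⁻ x, F x) * (∫⁻ x, G x) ≤ (∫⁻ x, H x)^2 :=
    (ENNReal.mul_le_mul_iff_right (a := 4) (by norm_num) (by norm_num)).mp hamgm
  have hiF : ∫⁻ x, F x = (∫⁻ x, f x) * Mf⁻¹ := lintegral_mul_const _ hf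
  have hiG : ∫⁻ x, G x = (∫⁻ x, g x) * Mg⁻¹ := lintegral_mul_const _ hg
  have hiH : ∫⁻ x, H x ≤ (∫⁻ x, h x) * s⁻¹ := by
    rw [show ∫⁻ x, H x = (∫⁻ x, min (h x) s) * s⁻¹ from
      lintegral_mul_const _ (hh.min measurable_const)]
    gcongr with x
    exact min_le_left _ _
  rw [hiF, hiG] at hFG
  have hchain : (∫⁻ x, f x) * (∫⁻ x, g x) * (Mf * Mg)⁻¹
      ≤ (∫⁻ x, h x)^2 * (Mf * Mg)⁻¹ := by
    calc (∫⁻ x, f x) * (∫⁻ x, g x) * (Mf * Mg)⁻¹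
        = (∫⁻ x, f x) * Mf⁻¹ * ((∫⁻ x, g x) * Mg⁻¹) := by rw [hinvmul]; ring
      _ ≤ (∫⁻ x, H x)^2 := hFG
      _ ≤ ((∫⁻ x, h x) * s⁻¹)^2 := by gcongr
      _ = (∫⁻ x, h x)^2 * (Mf * Mg)⁻¹ := by
          rw [mul_pow, ← ENNReal.inv_pow, hssq]
  calc (∫⁻ x, f x) * (∫⁻ x, g x)
      = (∫⁻ x, f x) * (∫⁻ x, g x) * (Mf * Mg)⁻¹ * (Mf * Mg) := by
        rw [← div_eq_mul_inv, ENNReal.div_mul_cancel hMfMg0 hMfMgt]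
    _ ≤ (∫⁻ x, h x)^2 * (Mf * Mg)⁻¹ * (Mf * Mg) := by gcongr
    _ = (∫⁻ x, h x)^2 := by
        rw [← div_eq_mul_inv, ENNReal.div_mul_cancel hMfMg0 hMfMgt]

lemma trunc_iSup (a : ℝ≥0∞) : ⨆ N : ℕ, min a (N + 1) = a := by
  apply le_antisymm (iSup_le fun N => min_le_left _ _)
  rcases eq_or_ne a ∞ with rfl | ha
  · have heq : ∀ N : ℕ, min (∞:ℝ≥0∞) (N+1) = (N+1:ℝ≥0∞) := fun N => min_eq_right le_top
    simp_rw [heq]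
    rw [show (⊤:ℝ≥0∞) = ⨆ n : ℕ, (n:ℝ≥0∞) from ENNReal.iSup_natCast.symm]
    exact iSup_le fun n => le_trans (by exact_mod_cast le_of_lt (Nat.lt_succ_self n))
      (le_iSup (fun N : ℕ => ((N:ℝ≥0∞) + 1)) n)
  · obtain ⟨n, hn⟩ := ENNReal.exists_nat_gt ha
    refine le_trans (le_of_eq ?_) (le_iSup (fun N : ℕ => min a (N+1)) n)
    rw [min_eq_left]
    exact le_trans hn.le (by exact_mod_cast Nat.le_succ n)

lemma isPLSpace_real : IsPLSpace ℝ := by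
  intro f g h hf hg hh hyp
  simp only [smul_eq_mul] at hyp
  rcases eq_or_ne (⨆ x, f x) 0 with hMf0 | hMf0
  · have hz : ∀ x, f x = 0 := fun x => le_antisymm (hMf0 ▸ le_iSup f x) zero_le
    simp [lintegral_congr hz]
  rcases eq_or_ne (⨆ x, g x) 0 with hMg0 | hMg0
  · have hz : ∀ x, g x = 0 := fun x => le_antisymm (hMg0 ▸ le_iSup g x) zero_le
    simp [lintegral_congr hz]
  obtain ⟨x₀, hx₀⟩ := lt_iSup_iff.mp (pos_iff_ne_zero.mpr hMf0 : 0 < ⨆ x, f x)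
  obtain ⟨y₀, hy₀⟩ := lt_iSup_iff.mp (pos_iff_ne_zero.mpr hMg0 : 0 < ⨆ x, g x)
  set fN : ℕ → ℝ → ℝ≥0∞ := fun N x => min (f x) (N + 1) with hfN
  set gN : ℕ → ℝ → ℝ≥0∞ := fun N x => min (g x) (N + 1) with hgN
  have hone : ∀ N : ℕ, (0:ℝ≥0∞) < N + 1 := fun N =>
    lt_of_lt_of_le zero_lt_one le_add_self
  have hbound : ∀ N M : ℕ, (∫⁻ x, fN N x) * (∫⁻ x, gN M x) ≤ (∫⁻ x, h x)^2 := by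
    intro N M
    refine pl1_bounded _ _ _ (hf.min measurable_const) (hg.min measurable_const) hh
      ?_ ?_ ?_ ?_ (fun x y => le_trans
        (mul_le_mul' (min_le_left _ _) (min_le_left _ _)) (hyp x y))
    · intro h0
      have h1 : fN N x₀ ≤ 0 := h0 ▸ le_iSup (fN N) x₀
      exact absurd h1 (not_le.mpr (lt_min hx₀ (hone N)))
    · exact ne_top_of_le_ne_top (by simp : ((N:ℝ≥0∞)+1) ≠ ∞)
        (iSup_le fun x => min_le_right _ _)
    · intro h0
      have h1 : gN M y₀ ≤ 0 := h0 ▸ le_iSup (gN M) y₀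
      exact absurd h1 (not_le.mpr (lt_min hy₀ (hone M)))
    · exact ne_top_of_le_ne_top (by simp : ((M:ℝ≥0∞)+1) ≠ ∞)
        (iSup_le fun x => min_le_right _ _)
  have hmono : ∀ (f : ℝ → ℝ≥0∞), Monotone fun (N:ℕ) (x:ℝ) => min (f x) (N+1) := by
    intro f N M hNM x
    refine min_le_min le_rfl (add_le_add_left ?_ 1)
    exact_mod_cast hNM
  have hflim : ∫⁻ x, f x = ⨆ N : ℕ, ∫⁻ x, fN N x := by
    rw [← lintegral_iSup (fun N => hf.min measurable_const) (hmono f)]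
    exact lintegral_congr fun x => (trunc_iSup (f x)).symm
  have hglim : ∫⁻ x, g x = ⨆ N : ℕ, ∫⁻ x, gN N x := by
    rw [← lintegral_iSup (fun N => hg.min measurable_const) (hmono g)]
    exact lintegral_congr fun x => (trunc_iSup (g x)).symm
  rw [hflim, hglim, ENNReal.iSup_mul]
  refine iSup_le fun N => ?_
  rw [ENNReal.mul_iSup]
  exact iSup_le fun M => hbound N M

/-- product of PL spaces is PL -/
lemma IsPLSpace.prod {α β : Type*} [MeasureSpace α] [AddCommMonoid α] [SMul ℝ α]
    [MeasureSpace β] [AddCommMonoid β] [SMul ℝ β]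
    [SigmaFinite (volume : Measure α)] [SigmaFinite (volume : Measure β)]
    (hα : IsPLSpace α) (hβ : IsPLSpace β) : IsPLSpace (α × β) := by
  intro f g h hf hg hh hyp
  set F : α → ℝ≥0∞ := fun a => ∫⁻ b, f (a, b) with hF
  set G : α → ℝ≥0∞ := fun a => ∫⁻ b, g (a, b) with hG
  set H : α → ℝ≥0∞ := fun a => ∫⁻ b, h (a, b) with hH
  have hFm : Measurable F := Measurable.lintegral_prod_right hf
  have hGm : Measurable G := Measurable.lintegral_prod_right hg
  have hHm : Measurable H := Measurable.lintegral_prod_right hh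
  have hyp' : ∀ a₁ a₂, F a₁ * G a₂ ≤ (H ((2:ℝ)⁻¹ • (a₁ + a₂)))^2 := by
    intro a₁ a₂
    refine hβ (fun b => f (a₁, b)) (fun b => g (a₂, b))
      (fun b => h ((2:ℝ)⁻¹ • (a₁ + a₂), b))
      (hf.comp (measurable_prodMk_left)) (hg.comp (measurable_prodMk_left))
      (hh.comp (measurable_prodMk_left)) ?_
    intro y₁ y₂
    have := hyp (a₁, y₁) (a₂, y₂)
    simpa [Prod.smul_def] using this
  have key := hα F G H hFm hGm hHm hyp'
  rw [Measure.volume_eq_prod, lintegral_prod f hf.aemeasurable, lintegral_prod g hg.aemeasurable,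
    lintegral_prod h hh.aemeasurable]
  exact key

/-- transfer along a measure preserving midpoint-affine equivalence -/
lemma IsPLSpace.transfer {α β : Type*} [MeasureSpace α] [AddCommMonoid α] [SMul ℝ α]
    [MeasureSpace β] [AddCommMonoid β] [SMul ℝ β]
    (e : α ≃ᵐ β) (he : MeasurePreserving e volume volume)
    (hlin : ∀ x y : α, e ((2:ℝ)⁻¹ • (x + y)) = (2:ℝ)⁻¹ • (e x + e y))
    (hα : IsPLSpace α) : IsPLSpace β := by
  intro f g h hf hg hh hyp
  have key := hα (f ∘ e) (g ∘ e) (h ∘ e) (hf.comp e.measurable) (hg.comp e.measurable)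
    (hh.comp e.measurable) (fun x y => by
      show f (e x) * g (e y) ≤ (h (e ((2:ℝ)⁻¹ • (x + y))))^2
      rw [hlin]
      exact hyp (e x) (e y))
  rwa [show ∫⁻ x, (f ∘ e) x = ∫⁻ x, f x from he.lintegral_comp hf,
    show ∫⁻ x, (g ∘ e) x = ∫⁻ x, g x from he.lintegral_comp hg,
    show ∫⁻ x, (h ∘ e) x = ∫⁻ x, h x from he.lintegral_comp hh] at key

/-- PL for Fin n → ℝ by induction -/
lemma isPLSpace_pi : ∀ n : ℕ, IsPLSpace (Fin n → ℝ) := by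
  intro n
  induction n with
  | zero =>
    intro f g h hf hg hh hyp
    rw [lintegral_unique f, lintegral_unique g, lintegral_unique h]
    have huniv : (volume : Measure (Fin 0 → ℝ)) univ = 1 := by
      rw [MeasureTheory.volume_pi, Measure.pi_univ]
      simp
    rw [huniv, mul_one, mul_one, mul_one]
    have hf0 : ∀ x : Fin 0 → ℝ, f x = f 0 := fun x => congrArg f (Subsingleton.elim x 0)
    have hg0 : ∀ x : Fin 0 → ℝ, g x = g 0 := fun x => congrArg g (Subsingleton.elim x 0)
    have hh0 : ∀ x : Fin 0 → ℝ, h x = h 0 := fun x => congrArg h (Subsingleton.elim x 0)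
    have h2 := hyp 0 0
    rw [hh0 ((2:ℝ)⁻¹ • ((0 : Fin 0 → ℝ) + 0))] at h2
    rw [hf0, hg0, hh0]
    exact h2
  | succ n ih =>
    have hprod : IsPLSpace (ℝ × (Fin n → ℝ)) := IsPLSpace.prod isPLSpace_real ih
    refine IsPLSpace.transfer (MeasurableEquiv.piFinSuccAbove (fun _ : Fin (n+1) => ℝ) 0).symm
      ((measurePreserving_piFinSuccAbove (fun _ : Fin (n+1) => (volume : Measure ℝ)) 0).symm)
      ?_ hprod
    intro x y
    simp only [MeasurableEquiv.piFinSuccAbove_symm_apply]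
    ext j
    rcases Fin.eq_zero_or_eq_succ j with rfl | ⟨k, rfl⟩
    · simp [Fin.insertNthEquiv]; ring
    · simp [Fin.insertNthEquiv]; ring

lemma isPLSpace_euclidean (m : ℕ) : IsPLSpace (EuclideanSpace ℝ (Fin m)) := by
  refine IsPLSpace.transfer (MeasurableEquiv.toLp 2 (Fin m → ℝ))
    (EuclideanSpace.volume_preserving_symm_measurableEquiv_toLp (Fin m)).symm ?_ (isPLSpace_pi m)
  intro x y
  rfl

lemma sep_lemma (m : ℕ) (ε : ℝ) (hε : 0 ≤ ε) (A B : Set (EuclideanSpace ℝ (Fin m)))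
    (hAm : MeasurableSet A) (hBm : MeasurableSet B)
    (hA : A ⊆ closedBall 0 1) (hB : B ⊆ closedBall 0 1)
    (hd : ∀ a ∈ A, ∀ b ∈ B, ε ≤ dist a b) :
    volume A * volume B ≤ ENNReal.ofReal (Real.exp (-(ε^2 * m / 4)))
      * (volume (closedBall (0 : EuclideanSpace ℝ (Fin m)) 1))^2 := by
  rcases A.eq_empty_or_nonempty with rfl | ⟨a₀, ha₀⟩
  · simp
  rcases B.eq_empty_or_nonempty with rfl | ⟨b₀, hb₀⟩
  · simp
  have hε2 : ε ≤ 2 := by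
    have h1 := hd a₀ ha₀ b₀ hb₀
    have h2 : dist a₀ b₀ ≤ 2 := by
      calc dist a₀ b₀ ≤ dist a₀ 0 + dist 0 b₀ := dist_triangle _ _ _
        _ ≤ 1 + 1 := add_le_add (mem_closedBall.mp (hA ha₀))
            (by rw [dist_comm]; exact mem_closedBall.mp (hB hb₀))
        _ = 2 := by norm_num
    linarith
  have hge : 0 ≤ 1 - ε^2/4 := by nlinarith
  set r := Real.sqrt (1 - ε^2/4) with hr
  have hr0 : 0 ≤ r := Real.sqrt_nonneg _
  have hrsq : r^2 = 1 - ε^2/4 := Real.sq_sqrt hge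
  set f := A.indicator (fun _ => (1:ℝ≥0∞)) with hf
  set g := B.indicator (fun _ => (1:ℝ≥0∞)) with hg
  set h := (closedBall (0 : EuclideanSpace ℝ (Fin m)) r).indicator (fun _ => (1:ℝ≥0∞)) with hh
  have hyp : ∀ x y, f x * g y ≤ (h ((2:ℝ)⁻¹ • (x + y)))^2 := by
    intro x y
    by_cases hx : x ∈ A
    · by_cases hy : y ∈ B
      · have hmid : (2:ℝ)⁻¹ • (x + y) ∈ closedBall (0 : EuclideanSpace ℝ (Fin m)) r := by
          rw [mem_closedBall, dist_zero_right, norm_smul]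
          have hpar := parallelogram_law_with_norm ℝ x y
          have hxn : ‖x‖ ≤ 1 := by
            have := hA hx; rwa [mem_closedBall, dist_zero_right] at this
          have hyn : ‖y‖ ≤ 1 := by
            have := hB hy; rwa [mem_closedBall, dist_zero_right] at this
          have hdist : ε ≤ ‖x - y‖ := by
            have := hd x hx y hy; rwa [dist_eq_norm] at this
          have hpar2 : ‖x + y‖^2 + ‖x - y‖^2 = 2*(‖x‖^2 + ‖y‖^2) := by
            exact hpar
          have hx2 : ‖x‖^2 ≤ 1 := by nlinarith [norm_nonneg x]
          have hy2 : ‖y‖^2 ≤ 1 := by nlinarith [norm_nonneg y]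
          have he2 : ε^2 ≤ ‖x - y‖^2 := by nlinarith
          have hxy2 : ‖x + y‖^2 ≤ 4 - ε^2 := by linarith
          rw [Real.norm_eq_abs, abs_of_pos (by norm_num : (0:ℝ) < 2⁻¹), hr]
          rw [show (2:ℝ)⁻¹ * ‖x + y‖ = Real.sqrt ((2⁻¹ * ‖x + y‖)^2) from
            (Real.sqrt_sq (by positivity)).symm]
          apply Real.sqrt_le_sqrt
          nlinarith [norm_nonneg (x + y)]
        rw [hf, hg, hh, indicator_of_mem hx, indicator_of_mem hy, indicator_of_mem hmid]
        norm_num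
      · rw [hg, indicator_of_notMem hy, mul_zero]; exact zero_le
    · rw [hf, indicator_of_notMem hx, zero_mul]; exact zero_le
  have key := isPLSpace_euclidean m f g h (measurable_const.indicator hAm)
    (measurable_const.indicator hBm) (measurable_const.indicator measurableSet_closedBall) hyp
  rw [hf, hg, hh] at key
  rw [show (∫⁻ x, A.indicator (fun _ => (1:ℝ≥0∞)) x) = volume A from lintegral_indicator_one hAm,
    show (∫⁻ x, B.indicator (fun _ => (1:ℝ≥0∞)) x) = volume B from lintegral_indicator_one hBm,
    show (∫⁻ x, (closedBall (0 : EuclideanSpace ℝ (Fin m)) r).indicator (fun _ => (1:ℝ≥0∞)) x)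
      = volume (closedBall (0 : EuclideanSpace ℝ (Fin m)) r) from
      lintegral_indicator_one measurableSet_closedBall] at key
  refine le_trans key ?_
  rw [Measure.addHaar_closedBall' volume _ hr0, mul_pow, ← ENNReal.ofReal_pow (by positivity)]
  gcongr
  rw [← pow_mul, finrank_euclideanSpace_fin, pow_mul', hrsq]
  calc (1 - ε^2/4)^m ≤ (Real.exp (-(ε^2/4)))^m := by
        apply pow_le_pow_left₀ hge
        linarith [Real.add_one_le_exp (-(ε^2/4))]
    _ = Real.exp (-(ε^2 * m / 4)) := by
        rw [← Real.exp_nat_mul]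
        congr 1
        ring


end LevyAux

section LevyMain

open Set Metric
open scoped ENNReal NNReal Pointwise

/-- Lévy's concentration inequality for the Euclidean ball: there is a universal
constant `c > 0` such that for every `m`, every `1`-Lipschitz function `f` on the
unit ball `B_m` with median `0` (w.r.t. the normalized Lebesgue measure `ν`),
and every `ε > 0`, `ν {x : |f x| > ε} ≤ 2 exp(−c ε² m)`. -/
theorem levy_concentration_euclidean_ball :
    ∃ c > (0 : ℝ), ∀ m : ℕ, ∀ f : EuclideanSpace ℝ (Fin m) → ℝ,
      LipschitzOnWith 1 f (Metric.closedBall 0 1) →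
      (1 / 2 : ENNReal) ≤ unitBallUniform m {x | f x ≤ 0} →
      (1 / 2 : ENNReal) ≤ unitBallUniform m {x | 0 ≤ f x} →
      ∀ ε > (0 : ℝ),
        unitBallUniform m {x | ε < |f x|} ≤
          ENNReal.ofReal (2 * Real.exp (-(c * ε ^ 2 * m))) := by
  refine ⟨1/8, by norm_num, ?_⟩
  intro m f hf hmed1 hmed2 ε hε
  obtain ⟨g, hgl, hEq⟩ := hf.extend_real
  set Bl := Metric.closedBall (0 : EuclideanSpace ℝ (Fin m)) 1 with hBl
  set V := volume Bl with hV
  have hV0 : V ≠ 0 := (measure_closedBall_pos volume (0:EuclideanSpace ℝ (Fin m)) one_pos).ne'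
  have hVt : V ≠ ∞ := measure_closedBall_lt_top.ne
  have hgc : Continuous g := hgl.continuous
  have happ : ∀ T : Set (EuclideanSpace ℝ (Fin m)), unitBallUniform m T = V⁻¹ * volume (T ∩ Bl) := by
    intro T
    rw [unitBallUniform, Measure.smul_apply,
      Measure.restrict_apply' measurableSet_closedBall, smul_eq_mul]
  have hνuniv : unitBallUniform m (univ : Set (EuclideanSpace ℝ (Fin m))) = 1 := by
    rw [happ, univ_inter, ← hV, ENNReal.inv_mul_cancel hV0 hVt]
  -- the four sets
  set A0 : Set (EuclideanSpace ℝ (Fin m)) := Bl ∩ g⁻¹' (Iic 0) with hA0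
  set A1 : Set (EuclideanSpace ℝ (Fin m)) := Bl ∩ g⁻¹' (Ici 0) with hA1
  set Bp : Set (EuclideanSpace ℝ (Fin m)) := Bl ∩ g⁻¹' (Ioi ε) with hBp
  set Bm : Set (EuclideanSpace ℝ (Fin m)) := Bl ∩ g⁻¹' (Iio (-ε)) with hBm
  have hA0m : MeasurableSet A0 := measurableSet_closedBall.inter
    (hgc.measurable measurableSet_Iic)
  have hA1m : MeasurableSet A1 := measurableSet_closedBall.inter
    (hgc.measurable measurableSet_Ici)
  have hBpm : MeasurableSet Bp := measurableSet_closedBall.inter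
    (hgc.measurable measurableSet_Ioi)
  have hBmm : MeasurableSet Bm := measurableSet_closedBall.inter
    (hgc.measurable measurableSet_Iio)
  -- medians
  have hmedA0 : (1/2 : ℝ≥0∞) ≤ V⁻¹ * volume A0 := by
    refine le_trans hmed1 ?_
    rw [happ]
    gcongr
    intro x ⟨hx1, hx2⟩
    exact ⟨hx2, by rw [mem_preimage, mem_Iic, ← hEq hx2]; exact hx1⟩
  have hmedA1 : (1/2 : ℝ≥0∞) ≤ V⁻¹ * volume A1 := by
    refine le_trans hmed2 ?_
    rw [happ]
    gcongr
    intro x ⟨hx1, hx2⟩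
    exact ⟨hx2, by rw [mem_preimage, mem_Ici, ← hEq hx2]; exact hx1⟩
  -- distance bounds
  have hdistp : ∀ a ∈ A0, ∀ b ∈ Bp, ε ≤ dist a b := by
    rintro a ⟨haB, ha⟩ b ⟨hbB, hb⟩
    rw [mem_preimage, mem_Iic] at ha
    rw [mem_preimage, mem_Ioi] at hb
    have h1 := hgl.dist_le_mul b a
    simp only [NNReal.coe_one, one_mul, Real.dist_eq] at h1
    have h2 : ε ≤ |g b - g a| := le_trans (by linarith) (le_abs_self _)
    rw [dist_comm]
    linarith
  have hdistm : ∀ a ∈ A1, ∀ b ∈ Bm, ε ≤ dist a b := by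
    rintro a ⟨haB, ha⟩ b ⟨hbB, hb⟩
    rw [mem_preimage, mem_Ici] at ha
    rw [mem_preimage, mem_Iio] at hb
    have h1 := hgl.dist_le_mul a b
    simp only [NNReal.coe_one, one_mul, Real.dist_eq] at h1
    have h2 : ε ≤ |g a - g b| := le_trans (by linarith) (le_abs_self _)
    linarith
  set D := ENNReal.ofReal (Real.exp (-(ε^2 * m / 4))) with hD
  -- generic: separated pair gives small ν
  have hgen : ∀ (A B : Set (EuclideanSpace ℝ (Fin m))), MeasurableSet A → MeasurableSet B → A ⊆ Bl → B ⊆ Bl →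
      (∀ a ∈ A, ∀ b ∈ B, ε ≤ dist a b) → (1/2 : ℝ≥0∞) ≤ V⁻¹ * volume A →
      V⁻¹ * volume B ≤ 2 * D := by
    intro A B hAm' hBm' hAs hBs hd' hmedA
    have hsep := sep_lemma m ε hε.le A B hAm' hBm' hAs hBs hd'
    have hprod : (V⁻¹ * volume A) * (V⁻¹ * volume B) ≤ D := by
      calc (V⁻¹ * volume A) * (V⁻¹ * volume B)
          = (volume A * volume B) * (V⁻¹ * V⁻¹) := by ring
        _ ≤ (D * V^2) * (V⁻¹ * V⁻¹) := by gcongr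
        _ = D * ((V * V⁻¹) * (V * V⁻¹)) := by rw [pow_two]; ring
        _ = D := by rw [ENNReal.mul_inv_cancel hV0 hVt]; ring
    calc V⁻¹ * volume B = 2 * ((1/2 : ℝ≥0∞) * (V⁻¹ * volume B)) := by
          rw [← mul_assoc, one_div, ENNReal.mul_inv_cancel (by norm_num) (by norm_num), one_mul]
      _ ≤ 2 * ((V⁻¹ * volume A) * (V⁻¹ * volume B)) := by gcongr
      _ ≤ 2 * D := by gcongr
  have hBpb : V⁻¹ * volume Bp ≤ 2 * D :=
    hgen A0 Bp hA0m hBpm inter_subset_left inter_subset_left hdistp hmedA0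
  have hBmb : V⁻¹ * volume Bm ≤ 2 * D :=
    hgen A1 Bm hA1m hBmm inter_subset_left inter_subset_left hdistm hmedA1
  have htot : unitBallUniform m {x | ε < |f x|} ≤ 4 * D := by
    rw [happ]
    calc V⁻¹ * volume ({x | ε < |f x|} ∩ Bl)
        ≤ V⁻¹ * (volume Bp + volume Bm) := by
          gcongr
          refine le_trans (measure_mono ?_) (measure_union_le _ _)
          rintro x ⟨hx1, hx2⟩
          rw [mem_setOf_eq, hEq hx2] at hx1
          rcases lt_abs.mp hx1 with hcase | hcase
          · exact Or.inl ⟨hx2, by rwa [mem_preimage, mem_Ioi]⟩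
          · exact Or.inr ⟨hx2, by rw [mem_preimage, mem_Iio]; linarith⟩
      _ = V⁻¹ * volume Bp + V⁻¹ * volume Bm := by rw [mul_add]
      _ ≤ 2 * D + 2 * D := add_le_add hBpb hBmb
      _ = 4 * D := by ring
  by_cases hcase : ε^2 * (m:ℝ) ≤ 8 * Real.log 2
  · -- trivial bound: measure at most 1
    have h1 : unitBallUniform m {x | ε < |f x|} ≤ 1 := by
      rw [← hνuniv]
      exact measure_mono (subset_univ _)
    refine le_trans h1 ?_
    rw [show (1:ℝ≥0∞) = ENNReal.ofReal 1 by simp]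
    apply ENNReal.ofReal_le_ofReal
    have hlog : Real.exp (-Real.log 2) ≤ Real.exp (-(1/8 * ε^2 * m)) :=
      Real.exp_le_exp.mpr (by linarith)
    rw [Real.exp_neg, Real.exp_log (by norm_num : (0:ℝ) < 2)] at hlog
    linarith
  · have hlt : 8 * Real.log 2 < ε^2 * m := not_le.mp hcase
    refine le_trans htot ?_
    rw [hD, show (4:ℝ≥0∞) = ENNReal.ofReal 4 by norm_num,
      ← ENNReal.ofReal_mul (by norm_num)]
    apply ENNReal.ofReal_le_ofReal
    have h2e : (2:ℝ) ≤ Real.exp (ε^2 * m / 8) := by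
      rw [show (2:ℝ) = Real.exp (Real.log 2) from (Real.exp_log (by norm_num)).symm]
      exact Real.exp_le_exp.mpr (by linarith)
    have hcomb : Real.exp (ε^2 * m / 8) * Real.exp (-(ε^2 * m / 4))
        = Real.exp (-(1/8 * ε^2 * m)) := by
      rw [← Real.exp_add]; congr 1; ring
    nlinarith [Real.exp_pos (-(ε^2 * (m:ℝ) / 4)), Real.exp_pos (-(1/8 * ε^2 * (m:ℝ)))]


end LevyMain
end
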